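/- Let 𝓕 be a totally bounded subset of diameter at most 1 of a metric space. Then for every integer k ≥ 0, N(𝓕, 2^{−k}) ≤ ∏_{i=0}^{k} sup_{f∈𝓕} N(B(f, 2^{1−i}) ∩ 𝓕, 2^{−i}); consequently H(𝓕, 2^{−k}) ≤ Σ_{i=0}^{k} H(𝓕, 2^{1−i}, 2^{−i}). -/

import Mathlib

open Set

noncomputable section

/-- The `ε`-covering number of `F`: the minimal number of closed balls of radius `ε`
with centers in `F` needed to cover `F`. -/
def coveringNum {E : Type*} [PseudoMetricSpace E] (F : Set E) (ε : ℝ) : ℕ :=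
  sInf {n : ℕ | ∃ s : Finset E, ↑s ⊆ F ∧ s.card = n ∧ F ⊆ ⋃ c ∈ s, Metric.closedBall c ε}

/-- The `ε`-entropy of `F`. -/
def entropy {E : Type*} [PseudoMetricSpace E] (F : Set E) (ε : ℝ) : ℝ :=
  Real.log (coveringNum F ε)

/-- The local `ε`-entropy of `F` at scale `δ`: `H(F, δ, ε) = sup_{f ∈ F} H(B(f,δ) ∩ F, ε)`. -/
def locEntropy {E : Type*} [PseudoMetricSpace E] (F : Set E) (δ ε : ℝ) : ℝ :=
  sSup {a : ℝ | ∃ f ∈ F, a = entropy (Metric.closedBall f δ ∩ F) ε}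

namespace CovAux

variable {E : Type*} [PseudoMetricSpace E]

lemma exists_cover {F : Set E} (hF : TotallyBounded F) {ε : ℝ} (hε : 0 < ε) :
    ∃ s : Finset E, ↑s ⊆ F ∧ F ⊆ ⋃ c ∈ s, Metric.closedBall c ε := by
  obtain ⟨t, htF, htfin, hcov⟩ :=
    totallyBounded_iff_subset.mp hF _ (Metric.dist_mem_uniformity hε)
  refine ⟨htfin.toFinset, by simpa using htF, ?_⟩
  intro x hx
  obtain ⟨y, hy, hxy⟩ := by simpa using hcov hx
  exact Set.mem_biUnion (htfin.mem_toFinset.mpr hy) (Metric.mem_closedBall.mpr hxy.le)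

lemma coveringNum_le_card {F : Set E} {ε : ℝ} {s : Finset E} (h1 : ↑s ⊆ F)
    (h2 : F ⊆ ⋃ c ∈ s, Metric.closedBall c ε) : coveringNum F ε ≤ s.card :=
  Nat.sInf_le ⟨s, h1, rfl, h2⟩

lemma coveringNum_spec {F : Set E} (hF : TotallyBounded F) {ε : ℝ} (hε : 0 < ε) :
    ∃ s : Finset E, ↑s ⊆ F ∧ s.card = coveringNum F ε ∧
      F ⊆ ⋃ c ∈ s, Metric.closedBall c ε := by
  have hne : {n : ℕ | ∃ s : Finset E, ↑s ⊆ F ∧ s.card = n ∧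
      F ⊆ ⋃ c ∈ s, Metric.closedBall c ε}.Nonempty := by
    obtain ⟨s, h1, h2⟩ := exists_cover hF hε
    exact ⟨s.card, s, h1, rfl, h2⟩
  exact Nat.sInf_mem hne

lemma coveringNum_pos {F : Set E} (hF : TotallyBounded F) (hne : F.Nonempty) {ε : ℝ}
    (hε : 0 < ε) : 0 < coveringNum F ε := by
  obtain ⟨s, _, hcard, hcov⟩ := coveringNum_spec hF hε
  rcases hne with ⟨x, hx⟩
  rw [← hcard]
  rcases s.eq_empty_or_nonempty with rfl | hs
  · simpa using hcov hx
  · exact Finset.card_pos.mpr hs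

lemma coveringNum_subset_le {F A : Set E} (hA : A ⊆ F) {ε : ℝ} {s : Finset E}
    (hcov : F ⊆ ⋃ c ∈ s, Metric.closedBall c (ε / 2)) :
    coveringNum A ε ≤ s.card := by
  classical
  set g : E → E := fun c =>
    if h : (Metric.closedBall c (ε / 2) ∩ A).Nonempty then h.choose else c with hg_def
  have hg : ∀ c, ∀ h : (Metric.closedBall c (ε / 2) ∩ A).Nonempty,
      g c ∈ Metric.closedBall c (ε / 2) ∩ A := by
    intro c h
    simp only [hg_def, dif_pos h]
    exact h.choose_spec
  set t := (s.filter (fun c => (Metric.closedBall c (ε / 2) ∩ A).Nonempty)).image g with ht_def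
  have ht_sub : ↑t ⊆ A := by
    intro x hx
    simp only [ht_def, Finset.coe_image, Set.mem_image, Finset.mem_coe,
      Finset.mem_filter] at hx
    obtain ⟨c, ⟨hcs, hcne⟩, rfl⟩ := hx
    exact (hg c hcne).2
  have ht_cov : A ⊆ ⋃ c ∈ t, Metric.closedBall c ε := by
    intro x hx
    obtain ⟨c, hcs, hxc⟩ := by simpa using hcov (hA hx)
    have hcne : (Metric.closedBall c (ε / 2) ∩ A).Nonempty :=
      ⟨x, Metric.mem_closedBall.mpr hxc, hx⟩
    have hgmem : g c ∈ t := Finset.mem_image_of_mem g (Finset.mem_filter.mpr ⟨hcs, hcne⟩)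
    refine Set.mem_biUnion hgmem ?_
    have h1 : dist (g c) c ≤ ε / 2 := (hg c hcne).1
    have h2 : dist x (g c) ≤ dist x c + dist c (g c) := dist_triangle _ _ _
    rw [dist_comm c (g c)] at h2
    exact Metric.mem_closedBall.mpr (h2.trans (by linarith))
  calc coveringNum A ε ≤ t.card := coveringNum_le_card ht_sub ht_cov
    _ ≤ _ := (Finset.card_image_le).trans (Finset.card_filter_le _ _)

end CovAux

/-- For a totally bounded set `F` of diameter at most `1` in a metric
space, `N(F, 2^{-k}) ≤ ∏_{i=0}^{k} sup_{f ∈ F} N(B(f, 2^{1-i}) ∩ F, 2^{-i})`, and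
consequently `H(F, 2^{-k}) ≤ ∑_{i=0}^{k} H(F, 2^{1-i}, 2^{-i})`. -/
theorem coveringNum_le_prod_local
    {E : Type*} [MetricSpace E] (F : Set E) (hF : TotallyBounded F)
    (hdiam : Metric.diam F ≤ 1) (k : ℕ) :
    (coveringNum F ((2 : ℝ) ^ (-(k : ℤ))) ≤
        ∏ i ∈ Finset.range (k + 1),
          (⨆ f ∈ F, coveringNum (Metric.closedBall f ((2 : ℝ) ^ (1 - (i : ℤ))) ∩ F)
            ((2 : ℝ) ^ (-(i : ℤ))))) ∧
      entropy F ((2 : ℝ) ^ (-(k : ℤ))) ≤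
        ∑ i ∈ Finset.range (k + 1),
          locEntropy F ((2 : ℝ) ^ (1 - (i : ℤ))) ((2 : ℝ) ^ (-(i : ℤ))) := by
  classical
  rcases F.eq_empty_or_nonempty with rfl | ⟨f0, hf0⟩
  · constructor
    · have h0 : coveringNum (∅ : Set E) ((2 : ℝ) ^ (-(k : ℤ))) = 0 :=
        Nat.le_zero.mp (Nat.sInf_le ⟨∅, by simp, by simp, by simp⟩)
      rw [h0]; exact Nat.zero_le _
    · have h0 : coveringNum (∅ : Set E) ((2 : ℝ) ^ (-(k : ℤ))) = 0 :=
        Nat.le_zero.mp (Nat.sInf_le ⟨∅, by simp, by simp, by simp⟩)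
      have hs : ∀ i : ℕ, locEntropy (∅ : Set E) ((2 : ℝ) ^ (1 - (i : ℤ)))
          ((2 : ℝ) ^ (-(i : ℤ))) = 0 := by
        intro i
        have : {a : ℝ | ∃ f ∈ (∅ : Set E), a = entropy
            (Metric.closedBall f ((2 : ℝ) ^ (1 - (i : ℤ))) ∩ ∅) ((2 : ℝ) ^ (-(i : ℤ)))} =
            (∅ : Set ℝ) := by simp
        rw [locEntropy, this, Real.sSup_empty]
      simp only [entropy, h0, hs, Nat.cast_zero, Real.log_zero, Finset.sum_const_zero,
        le_refl]
  -- main case : F nonempty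
  have h2 : (0 : ℝ) < 2 := by norm_num
  have hεpos : ∀ i : ℕ, (0 : ℝ) < (2 : ℝ) ^ (-(i : ℤ)) := fun i => zpow_pos h2 _
  have hδpos : ∀ i : ℕ, (0 : ℝ) < (2 : ℝ) ^ (1 - (i : ℤ)) := fun i => zpow_pos h2 _
  set g : ℕ → E → ℕ := fun i f =>
    coveringNum (Metric.closedBall f ((2 : ℝ) ^ (1 - (i : ℤ))) ∩ F)
      ((2 : ℝ) ^ (-(i : ℤ))) with hg
  set M : ℕ → ℕ := fun i => ⨆ f ∈ F, g i f with hM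
  -- uniform bounds
  have hbound : ∀ i : ℕ, ∃ bnd : ℕ, ∀ A : Set E, A ⊆ F →
      coveringNum A ((2 : ℝ) ^ (-(i : ℤ))) ≤ bnd := by
    intro i
    obtain ⟨s, hsF, hscov⟩ := CovAux.exists_cover hF
      (ε := (2 : ℝ) ^ (-(i : ℤ)) / 2) (by positivity)
    exact ⟨s.card, fun A hA => CovAux.coveringNum_subset_le hA hscov⟩
  choose bnd hbnd using hbound
  have hgb : ∀ i : ℕ, ∀ f : E, g i f ≤ bnd i := by
    intro i f
    exact hbnd i _ Set.inter_subset_right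
  have hBdd : ∀ i : ℕ, BddAbove (Set.range fun f => ⨆ _ : f ∈ F, g i f) := by
    intro i
    refine ⟨bnd i, ?_⟩
    rintro x ⟨f, rfl⟩
    dsimp only
    rcases em (f ∈ F) with hf | hf
    · rw [ciSup_pos hf]; exact hgb i f
    · haveI : IsEmpty (f ∈ F) := ⟨hf⟩
      rw [ciSup_of_empty]
      exact Nat.zero_le _
  have hle_M : ∀ i : ℕ, ∀ f ∈ F, g i f ≤ M i := by
    intro i f hf
    have h1 : (⨆ _ : f ∈ F, g i f) = g i f := ciSup_pos hf
    rw [hM]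
    calc g i f = ⨆ _ : f ∈ F, g i f := h1.symm
      _ ≤ _ := le_ciSup (hBdd i) f
  have hg_pos : ∀ i : ℕ, ∀ f ∈ F, 1 ≤ g i f := by
    intro i f hf
    refine Nat.one_le_iff_ne_zero.mpr (Nat.pos_iff_ne_zero.mp ?_)
    refine CovAux.coveringNum_pos (hF.subset Set.inter_subset_right)
      ⟨f, Metric.mem_closedBall_self (hδpos i).le, hf⟩ (hεpos i)
  have hMpos : ∀ i : ℕ, 0 < M i := fun i =>
    lt_of_lt_of_le (hg_pos i f0 hf0) (hle_M i f0 hf0)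
  -- key exponent identity
  have hexp : ∀ m : ℕ, (2 : ℝ) ^ (-(m : ℤ)) = (2 : ℝ) ^ (1 - ((m + 1 : ℕ) : ℤ)) := by
    intro m
    congr 1
    push_cast
    ring
  -- main induction
  have key : ∀ m : ℕ, coveringNum F ((2 : ℝ) ^ (-(m : ℤ))) ≤
      ∏ i ∈ Finset.range (m + 1), M i := by
    intro m
    induction m with
    | zero =>
      rw [Finset.prod_range_one]
      have hFsub : F ⊆ Metric.closedBall f0 ((2 : ℝ) ^ (1 - ((0 : ℕ) : ℤ))) := by
        intro x hx
        have hd : dist x f0 ≤ Metric.diam F :=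
          Metric.dist_le_diam_of_mem hF.isBounded hx hf0
        have : ((2 : ℝ) ^ (1 - ((0 : ℕ) : ℤ))) = 2 := by norm_num
        rw [Metric.mem_closedBall, this]
        linarith
      have hFeq : Metric.closedBall f0 ((2 : ℝ) ^ (1 - ((0 : ℕ) : ℤ))) ∩ F = F :=
        Set.inter_eq_right.mpr hFsub
      have e : g 0 f0 = coveringNum F ((2 : ℝ) ^ (-((0 : ℕ) : ℤ))) := by
        rw [hg]
        simp only []
        rw [hFeq]
      exact e ▸ hle_M 0 f0 hf0
    | succ m ih =>
      obtain ⟨s, hsF, hscard, hscov⟩ := CovAux.coveringNum_spec hF (hεpos m)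
      have hstep : ∀ c : E, c ∈ F → ∃ t : Finset E,
          ↑t ⊆ Metric.closedBall c ((2 : ℝ) ^ (1 - ((m + 1 : ℕ) : ℤ))) ∩ F ∧
          t.card = g (m + 1) c ∧
          Metric.closedBall c ((2 : ℝ) ^ (1 - ((m + 1 : ℕ) : ℤ))) ∩ F ⊆
            ⋃ c' ∈ t, Metric.closedBall c' ((2 : ℝ) ^ (-((m + 1 : ℕ) : ℤ))) := by
        intro c hc
        obtain ⟨t, h1, h2, h3⟩ := CovAux.coveringNum_spec
          (hF.subset (Set.inter_subset_right :
            Metric.closedBall c ((2 : ℝ) ^ (1 - ((m + 1 : ℕ) : ℤ))) ∩ F ⊆ F))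
          (hεpos (m + 1))
        exact ⟨t, h1, by rw [h2, hg], h3⟩
      choose T hT1 hT2 hT3 using hstep
      set U : Finset E := s.attach.biUnion (fun c => T c (hsF c.2)) with hU
      have hUF : ↑U ⊆ F := by
        intro x hx
        simp only [hU, Finset.coe_biUnion, Set.mem_iUnion, Finset.mem_coe] at hx
        obtain ⟨c, _, hxc⟩ := hx
        exact (hT1 c (hsF c.2) hxc).2
      have hUcov : F ⊆ ⋃ c ∈ U, Metric.closedBall c ((2 : ℝ) ^ (-((m + 1 : ℕ) : ℤ))) := by
        intro x hx
        obtain ⟨c, hcs, hxc⟩ := Set.mem_iUnion₂.mp (hscov hx)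
        have hxc' : x ∈ Metric.closedBall c ((2 : ℝ) ^ (1 - ((m + 1 : ℕ) : ℤ))) ∩ F := by
          refine ⟨?_, hx⟩
          rw [← hexp m]
          exact hxc
        obtain ⟨c', hc't, hxc''⟩ := Set.mem_iUnion₂.mp (hT3 c (hsF hcs) hxc')
        have : c' ∈ U := by
          rw [hU]
          exact Finset.mem_biUnion.mpr ⟨⟨c, hcs⟩, Finset.mem_attach _ _, hc't⟩
        exact Set.mem_biUnion this hxc''
      have hUcard : U.card ≤ s.card * M (m + 1) := by
        calc U.card ≤ ∑ c ∈ s.attach, (T c (hsF c.2)).card := Finset.card_biUnion_le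
          _ ≤ ∑ _c ∈ s.attach, M (m + 1) := by
              refine Finset.sum_le_sum ?_
              intro c _
              rw [hT2 c (hsF c.2)]
              exact hle_M (m + 1) c (hsF c.2)
          _ = s.card * M (m + 1) := by
              rw [Finset.sum_const, Finset.card_attach, smul_eq_mul]
      calc coveringNum F ((2 : ℝ) ^ (-((m + 1 : ℕ) : ℤ))) ≤ U.card :=
            CovAux.coveringNum_le_card hUF hUcov
        _ ≤ s.card * M (m + 1) := hUcard
        _ = coveringNum F ((2 : ℝ) ^ (-(m : ℤ))) * M (m + 1) := by rw [hscard]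
        _ ≤ (∏ i ∈ Finset.range (m + 1), M i) * M (m + 1) :=
            Nat.mul_le_mul_right _ ih
        _ = ∏ i ∈ Finset.range (m + 1 + 1), M i := (Finset.prod_range_succ M (m + 1)).symm
  refine ⟨key k, ?_⟩
  -- entropy part
  have hNpos : 0 < coveringNum F ((2 : ℝ) ^ (-(k : ℤ))) :=
    CovAux.coveringNum_pos hF ⟨f0, hf0⟩ (hεpos k)
  have hterm : ∀ i : ℕ, Real.log (M i) ≤
      locEntropy F ((2 : ℝ) ^ (1 - (i : ℤ))) ((2 : ℝ) ^ (-(i : ℤ))) := by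
    intro i
    -- find f1 attaining the sup
    have hrange : (Set.range fun f => ⨆ _ : f ∈ F, g i f).Nonempty := ⟨_, ⟨f0, rfl⟩⟩
    obtain ⟨f1, hf1⟩ := Nat.sSup_mem hrange (hBdd i)
    have hMi : M i = ⨆ _ : f1 ∈ F, g i f1 := by rw [hM]; exact hf1.symm
    have hf1F : f1 ∈ F := by
      by_contra hf1n
      haveI : IsEmpty (f1 ∈ F) := ⟨hf1n⟩
      rw [ciSup_of_empty] at hMi
      exact absurd hMi (by simpa using (hMpos i).ne')
    have hMg : M i = g i f1 := by rw [hMi, ciSup_pos hf1F]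
    have hSet : (fun a : ℝ => ∃ f ∈ F, a = entropy
        (Metric.closedBall f ((2 : ℝ) ^ (1 - (i : ℤ))) ∩ F) ((2 : ℝ) ^ (-(i : ℤ))))
        (Real.log (M i)) := by
      refine ⟨f1, hf1F, ?_⟩
      rw [entropy, hMg, hg]
    have hBddR : BddAbove {a : ℝ | ∃ f ∈ F, a = entropy
        (Metric.closedBall f ((2 : ℝ) ^ (1 - (i : ℤ))) ∩ F) ((2 : ℝ) ^ (-(i : ℤ)))} := by
      refine ⟨Real.log (bnd i), ?_⟩
      rintro a ⟨f, hf, rfl⟩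
      rw [entropy]
      have h1 : (1 : ℕ) ≤ g i f := hg_pos i f hf
      have h2' : g i f ≤ bnd i := hgb i f
      have hcast : (0 : ℝ) < (g i f : ℝ) := by exact_mod_cast h1
      have : (coveringNum (Metric.closedBall f ((2 : ℝ) ^ (1 - (i : ℤ))) ∩ F)
          ((2 : ℝ) ^ (-(i : ℤ))) : ℝ) = (g i f : ℝ) := by rw [hg]
      rw [this]
      exact Real.log_le_log hcast (by exact_mod_cast h2')
    exact le_csSup hBddR hSet
  have hcastle : (coveringNum F ((2 : ℝ) ^ (-(k : ℤ))) : ℝ) ≤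
      ∏ i ∈ Finset.range (k + 1), (M i : ℝ) := by
    rw [← Nat.cast_prod]
    exact_mod_cast key k
  calc entropy F ((2 : ℝ) ^ (-(k : ℤ)))
      = Real.log (coveringNum F ((2 : ℝ) ^ (-(k : ℤ))) : ℝ) := rfl
    _ ≤ Real.log (∏ i ∈ Finset.range (k + 1), (M i : ℝ)) :=
        Real.log_le_log (by exact_mod_cast hNpos) hcastle
    _ = ∑ i ∈ Finset.range (k + 1), Real.log (M i : ℝ) :=
        Real.log_prod (fun i _ => by exact_mod_cast (hMpos i).ne')
    _ ≤ _ := Finset.sum_le_sum (fun i _ => hterm i)
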